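/- arXiv:2312.05964 — 2 statements merged into one kernel-verified Lean document; each statement's English description precedes it below -/
import Mathlib

section
/- Let ι be a type of variable indices and consider a finite group of rules g, where each rule r ∈ g has an output index o r : ι, an antecedent predicate A r : (ι → Bool) → Bool, and an output value α r : Bool. Assume (i) the map r ↦ o r is injective on g, and (ii) each antecedent is independent of all outputs of the group: for every rule r ∈ g and all states v, v' : ι → Bool that agree on every index outside the set O = {o r' : r' ∈ g}, one has A r v = A r v'. Then for every state v : ι → Bool and every ordering r_1, …, r_n of the rules of g, sequentially applying the single-rule updates (where applying rule r to state u sets coordinate o r to α r if A r u holds and leaves all other coordinates unchanged) yields the same final state, namely the simultaneous update v* defined by v* (o r) = (if A r v then α r else v (o r)) for r ∈ g and v* j = v j for j ∉ O. -/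
/-- For a group `g` of rules with pairwise distinct output
indices (`o` injective on `g`) whose antecedents `A r` do not depend on any
output index of the group, sequentially applying the single-rule updates in
any order (any duplicate-free list enumerating `g`) yields the simultaneous
update `v*`, where `v* (o r) = if A r v then α r else v (o r)` for `r ∈ g`
and `v* j = v j` for `j` outside the output set. -/
theorem sequential_eq_simultaneous {ι ρ : Type*} [DecidableEq ι]
    (g : Finset ρ) (o : ρ → ι) (A : ρ → (ι → Bool) → Bool) (α : ρ → Bool)
    (hinj : Set.InjOn o g)
    (hind : ∀ r ∈ g, ∀ v v' : ι → Bool,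
      (∀ j : ι, (∀ r' ∈ g, o r' ≠ j) → v j = v' j) → A r v = A r v')
    (v : ι → Bool)
    (L : List ρ) (hnd : L.Nodup) (hLg : ∀ r, r ∈ L ↔ r ∈ g)
    (vstar : ι → Bool)
    (hout : ∀ r ∈ g, vstar (o r) = if A r v then α r else v (o r))
    (hoff : ∀ j : ι, (∀ r ∈ g, o r ≠ j) → vstar j = v j) :
    L.foldl
      (fun u r => Function.update u (o r) (if A r u then α r else u (o r)))
      v = vstar := by
  have key : ∀ M : List ρ, M.Nodup → (∀ r ∈ M, r ∈ g) →
      ∀ u : ι → Bool,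
      (∀ j, (∀ r ∈ g, o r ≠ j) → u j = v j) →
      (∀ r ∈ g, r ∉ M → u (o r) = vstar (o r)) →
      (∀ r ∈ M, u (o r) = v (o r)) →
      M.foldl
        (fun u r => Function.update u (o r) (if A r u then α r else u (o r)))
        u = vstar := by
    intro M
    induction M with
    | nil =>
      intro _ _ u h1 h2 _
      funext j
      by_cases hj : ∃ r ∈ g, o r = j
      · obtain ⟨r, hr, rfl⟩ := hj
        exact h2 r hr (by simp)
      · push_neg at hj
        rw [List.foldl_nil, h1 j hj, hoff j hj]
    | cons r M ih =>
      intro hnd hsub u h1 h2 h3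
      rw [List.nodup_cons] at hnd
      obtain ⟨hrM, hndM⟩ := hnd
      have hrg : r ∈ g := hsub r (by simp)
      have hAu : A r u = A r v := hind r hrg u v h1
      rw [List.foldl_cons]
      set u' := Function.update u (o r) (if A r u then α r else u (o r))
        with hu'def
      have hu'or : u' (o r) = vstar (o r) := by
        rw [hu'def, Function.update_self, hAu, hout r hrg,
          h3 r (by simp)]
      have hne : ∀ r' ∈ g, r' ≠ r → o r' ≠ o r := fun r' hr' hne' heq =>
        hne' (hinj hr' hrg heq)
      apply ih hndM (fun r' hr' => hsub r' (List.mem_cons_of_mem _ hr')) u'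
      · intro j hj
        rw [hu'def, Function.update_of_ne (hj r hrg).symm, h1 j hj]
      · intro r' hr' hr'M
        by_cases hrr : r' = r
        · subst hrr; exact hu'or
        · rw [hu'def, Function.update_of_ne (hne r' hr' hrr)]
          exact h2 r' hr' (by simp [hrr, hr'M])
      · intro r' hr'
        have hrr : r' ≠ r := fun h => hrM (h ▸ hr')
        rw [hu'def, Function.update_of_ne (hne r' (hsub r' (List.mem_cons_of_mem _ hr')) hrr)]
        exact h3 r' (List.mem_cons_of_mem _ hr')
  exact key L hnd (fun r hr => (hLg r).1 hr) v
    (fun _ _ => rfl)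
    (fun r hr hrL => absurd ((hLg r).2 hr) hrL)
    (fun _ _ => rfl)
end

section
/- Let ι be a type of variable indices and consider a finite group of rules g, where each rule r ∈ g has an output index o r : ι, an antecedent predicate A r : (ι → Bool) → Bool, and an output value α r : Bool. Assume (i) the map r ↦ o r is injective on g, and (ii) for every rule r ∈ g and all states v, v' : ι → Bool that agree on every index outside the set O = {o r' : r' ∈ g}, one has A r v = A r v'. Then the simultaneous update v* of any state v (defined by v* (o r) = (if A r v then α r else v (o r)) for r ∈ g and v* j = v j for j ∉ O) satisfies every rule of the group: for every r ∈ g, if A r v* holds then v* (o r) = α r. In particular, the output of the constraint module has zero hard-rule violations. -/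
/-- For a group `g` of rules with pairwise distinct output
indices whose antecedents do not depend on the group's output indices, the
simultaneous update `v*` of any state `v` satisfies every rule of the group:
if `A r v*` holds then `v* (o r) = α r`. -/
theorem simultaneous_update_satisfies {ι ρ : Type*} [DecidableEq ι]
    (g : Finset ρ) (o : ρ → ι) (A : ρ → (ι → Bool) → Bool) (α : ρ → Bool)
    (hinj : Set.InjOn o g)
    (hind : ∀ r ∈ g, ∀ v v' : ι → Bool,
      (∀ j : ι, (∀ r' ∈ g, o r' ≠ j) → v j = v' j) → A r v = A r v')
    (v vstar : ι → Bool)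
    (hout : ∀ r ∈ g, vstar (o r) = if A r v then α r else v (o r))
    (hoff : ∀ j : ι, (∀ r ∈ g, o r ≠ j) → vstar j = v j) :
    ∀ r ∈ g, A r vstar = true → vstar (o r) = α r := by
  intro r hr hA
  have hAv : A r v = true := by
    rw [hind r hr v vstar fun j hj => (hoff j hj).symm]; exact hA
  rw [hout r hr, hAv]; simp
end
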